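/- Let m ≥ 2, let Γ be the free group on m generators a_1, …, a_m, and let μ be the uniform distribution on the set {a_1, …, a_m} (which freely generates a free semigroup). Then for every ρ ∈ [0,1] the asymptotic entropy of the π^ρ-random walk on Γ × Γ equals h(π^ρ) = log m − (1 − ((m−1)/m)ρ) log(1 − ((m−1)/m)ρ) − ((m−1)/m)ρ log(ρ/m). In particular h(π^1) = 2 log m and h(π^ρ) < h(π^1) whenever ρ < 1. -/

import Mathlib

open Filter Real Topology MeasureTheory
open scoped ENNReal

namespace NS

/-- The probability of a set under a `PMF`, as a real number. -/
noncomputable def pmfSet {X : Type*} (μ : PMF X) (A : Set X) : ℝ :=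
  (∑' x : A, μ (x : X)).toReal

/-- Total variation distance between two `PMF`s: `sup_{A ⊆ X} |μ(A) - ν(A)|`. -/
noncomputable def tv {X : Type*} (μ ν : PMF X) : ℝ :=
  ⨆ A : Set X, |pmfSet μ A - pmfSet ν A|

/-- Convolution of two probability measures on a group. -/
noncomputable def conv {G : Type*} [Group G] (μ ν : PMF G) : PMF G :=
  μ.bind fun x => ν.map fun y => x * y

/-- `n`-fold convolution of a probability measure on a group (law of `w_n = x_1 ⋯ x_n`). -/
noncomputable def convN {G : Type*} [Group G] (μ : PMF G) : ℕ → PMF G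
  | 0 => PMF.pure 1
  | n + 1 => conv (convN μ n) μ

/-- Product of two probability measures. -/
noncomputable def prodPMF {X Y : Type*} (μ : PMF X) (ν : PMF Y) : PMF (X × Y) :=
  μ.bind fun x => ν.map fun y => (x, y)

/-- Diagonal embedding `μ_diag` of a probability measure: `μ_diag((x,y)) = μ(x)` if `x = y`. -/
noncomputable def diagPMF {X : Type*} (μ : PMF X) : PMF (X × X) :=
  μ.map fun x => (x, x)

/-- Convex combination `ρ·μ + (1-ρ)·ν` of two `PMF`s, for `ρ ∈ [0,1]`. -/
noncomputable def mix {X : Type*} (ρ : ℝ) (μ ν : PMF X) : PMF X :=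
  (PMF.bernoulli (min (Real.toNNReal ρ) 1) (min_le_right _ _)).bind
    fun b => if b then μ else ν

/-- The measure `π^ρ := ρ·(μ×μ) + (1-ρ)·μ_diag` on `G × G`. -/
noncomputable def piRho {G : Type*} [Group G] (μ : PMF G) (ρ : ℝ) : PMF (G × G) :=
  mix ρ (prodPMF μ μ) (diagPMF μ)

/-- Shannon entropy `H(μ) = -∑ μ(x) log μ(x)` of a `PMF`. -/
noncomputable def entH {X : Type*} (μ : PMF X) : ℝ :=
  ∑' x, Real.negMulLog ((μ x).toReal)

/-- `d` is the left-invariant word metric associated with the generating set `S`. -/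
def IsWordMetric {G : Type*} [Group G] (S : Finset G) (d : G → G → ℝ) : Prop :=
  ∀ x y : G, d x y =
    ((sInf {n : ℕ | ∃ f : Fin n → G, (∀ i, f i ∈ S) ∧ x⁻¹ * y = (List.ofFn f).prod} : ℕ) : ℝ)

/-- Gromov product `(x|y)_w = (d(x,w) + d(y,w) - d(x,y))/2`. -/
noncomputable def gromov {G : Type*} (d : G → G → ℝ) (w x y : G) : ℝ :=
  (d x w + d y w - d x y) / 2

/-- Gromov hyperbolicity of a metric, via the Gromov product four-point condition. -/
def IsHyperbolic {G : Type*} (d : G → G → ℝ) : Prop :=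
  ∃ δ : ℝ, 0 ≤ δ ∧ ∀ x y z w : G,
    min (gromov d w x z) (gromov d w z y) - δ ≤ gromov d w x y

/-- `μ` is non-elementary: the subgroup generated by its support contains
a free subgroup of rank 2. -/
def NonElementary {G : Type*} [Group G] (μ : PMF G) : Prop :=
  ∃ φ : FreeGroup (Fin 2) →* G,
    Function.Injective φ ∧ ∀ w, φ w ∈ Subgroup.closure μ.support

/-- `μ` has finite first moment: `∑_x d(o,x) μ(x) < ∞`. -/
def FiniteFirstMoment {G : Type*} [Group G] (d : G → G → ℝ) (μ : PMF G) : Prop :=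
  Summable fun x => d 1 x * (μ x).toReal

/-- `d` is a left-invariant metric on the group `G`. -/
def IsLeftInvMetric {G : Type*} [Group G] (d : G → G → ℝ) : Prop :=
  (∀ x y : G, 0 ≤ d x y) ∧ (∀ x y : G, d x y = 0 ↔ x = y) ∧
  (∀ x y : G, d x y = d y x) ∧ (∀ x y z : G, d x z ≤ d x y + d y z) ∧
  (∀ g x y : G, d (g * x) (g * y) = d x y)

/-- The growth function `R ↦ (1/R) log #{x : |x| ≤ R}`. -/
noncomputable def growthFn {G : Type*} [Group G] (d : G → G → ℝ) : ℝ → ℝ :=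
  fun R => Real.log (Nat.card {x : G | d 1 x ≤ R}) / R

/-- `d` has finite exponential growth rate:
balls are finite and `limsup_{R→∞} (1/R) log #B(o,R) < ∞`. -/
def FiniteExpGrowth {G : Type*} [Group G] (d : G → G → ℝ) : Prop :=
  (∀ R : ℝ, {x : G | d 1 x ≤ R}.Finite) ∧
  Filter.IsBoundedUnder (· ≤ ·) Filter.atTop (growthFn d)

/-- The exponential growth rate `v = limsup_{R→∞} (1/R) log #B(o,R)`. -/
noncomputable def expRate {G : Type*} [Group G] (d : G → G → ℝ) : ℝ :=
  Filter.limsup (growthFn d) Filter.atTop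

/-- Uniform first moment condition (M) for a set of probability measures. -/
def UnifFirstMoment {G : Type*} [Group G] (d : G → G → ℝ) (M : Set (PMF G)) : Prop :=
  (∀ μ ∈ M, Summable fun x => d 1 x * (μ x).toReal) ∧
  ∀ K : ℕ → Finset G, Monotone K → (⋃ n, (K n : Set G)) = Set.univ →
    ∀ ε > 0, ∃ N : ℕ, ∀ n ≥ N, ∀ μ ∈ M,
      (∑' x : {x : G // x ∉ K n}, d 1 (x : G) * (μ (x : G)).toReal) ≤ ε

open scoped Classical in
/-- The explicit entropy formula
`h(π^ρ) = log m - (1 - ((m-1)/m)ρ) log(1 - ((m-1)/m)ρ) - ((m-1)/m)ρ log(ρ/m)`. -/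
noncomputable def hFormula (m : ℕ) (ρ : ℝ) : ℝ :=
  Real.log m - (1 - ((m : ℝ) - 1) / m * ρ) * Real.log (1 - ((m : ℝ) - 1) / m * ρ)
    - ((m : ℝ) - 1) / m * ρ * Real.log (ρ / m)

-- AUX LEMMAS (to be inserted before statement14)
section Aux

lemma entH_eq_sum {X : Type*} (μ : PMF X) (s : Finset X) (h : μ.support ⊆ s) :
    entH μ = ∑ x ∈ s, Real.negMulLog ((μ x).toReal) := by
  refine tsum_eq_sum fun x hx => ?_
  have : μ x = 0 := by
    by_contra h0
    exact hx (h (PMF.mem_support_iff μ x |>.2 h0))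
  simp [this]

lemma mass_eq_one {X : Type*} (μ : PMF X) (s : Finset X) (h : μ.support ⊆ s) :
    ∑ x ∈ s, ((μ x).toReal) = 1 := by
  have h1 : ∑ x ∈ s, μ x = 1 := by
    rw [← tsum_eq_sum (L := SummationFilter.unconditional _) (s := s) fun x hx => ?_]
    · exact μ.tsum_coe
    · by_contra h0
      exact hx (h (PMF.mem_support_iff μ x |>.2 h0))
  have : (∑ x ∈ s, μ x).toReal = 1 := by rw [h1]; simp
  rwa [ENNReal.toReal_sum (fun x _ => μ.apply_ne_top x)] at this

lemma entH_pure {X : Type*} (a : X) : entH (PMF.pure a) = 0 := by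
  have h : ∀ x, Real.negMulLog ((PMF.pure a x).toReal) = 0 := by
    intro x
    by_cases h : x = a <;> simp [PMF.pure_apply, h]
  exact (tsum_congr h).trans tsum_zero

lemma prodPMF_apply {X Y : Type*} (μ : PMF X) (ν : PMF Y) (x : X) (y : Y) :
    prodPMF μ ν (x, y) = μ x * ν y := by
  rw [prodPMF, PMF.bind_apply]
  rw [tsum_eq_single x]
  · congr 1
    rw [PMF.map_apply]
    rw [tsum_eq_single y]
    · simp
    · intro y' hy'; simp [Prod.ext_iff, hy'.symm]
  · intro x' hx'
    rw [PMF.map_apply]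
    convert mul_zero _
    rw [tsum_eq_single y]
    · simp [Prod.ext_iff, hx'.symm]
    · intro y' hy'; simp [Prod.ext_iff, hy'.symm]

lemma support_prodPMF {X Y : Type*} (μ : PMF X) (ν : PMF Y) :
    (prodPMF μ ν).support = μ.support ×ˢ ν.support := by
  ext ⟨x, y⟩
  simp [PMF.mem_support_iff, prodPMF_apply, Set.mem_prod]

lemma conv_eq_map_prod {G : Type*} [Group G] (μ ν : PMF G) :
    conv μ ν = (prodPMF μ ν).map (fun p => p.1 * p.2) := by
  rw [conv, prodPMF, PMF.map_bind]
  congr 1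
  funext x
  rw [PMF.map_comp]
  rfl

lemma map_apply_of_injOn {X Y : Type*} (μ : PMF X) (f : X → Y) (s : Finset X)
    (hs : μ.support ⊆ s) (hf : Set.InjOn f s) (x : X) (hx : x ∈ s) :
    (μ.map f) (f x) = μ x := by
  rw [PMF.map_apply]
  rw [tsum_eq_single x]
  · simp
  · intro x' hx'
    by_cases h : f x = f x'
    · have : μ x' = 0 := by
        by_contra h0
        exact hx' (hf (hs (PMF.mem_support_iff μ x' |>.2 h0)) hx h.symm)
      simp [this]
    · simp [h]

lemma entH_map_injOn {X Y : Type*} [DecidableEq Y] (μ : PMF X) (f : X → Y) (s : Finset X)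
    (hs : μ.support ⊆ s) (hf : Set.InjOn f s) :
    entH (μ.map f) = entH μ := by
  have hsub : (μ.map f).support ⊆ ↑(s.image f) := by
    simpa [PMF.support_map, Finset.coe_image] using Set.image_mono (f := f) hs
  rw [entH_eq_sum (μ.map f) (s.image f) hsub]
  rw [Finset.sum_image (fun x hx y hy hxy => hf hx hy hxy)]
  rw [entH_eq_sum μ s hs]
  exact Finset.sum_congr rfl fun x hx => by rw [map_apply_of_injOn μ f s hs hf x hx]

lemma entH_prod {X Y : Type*} (μ : PMF X) (ν : PMF Y) (sa : Finset X) (sb : Finset Y)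
    (ha : μ.support ⊆ sa) (hb : ν.support ⊆ sb) :
    entH (prodPMF μ ν) = entH μ + entH ν := by
  have hsub : (prodPMF μ ν).support ⊆ ↑(sa ×ˢ sb) := by
    rw [support_prodPMF, Finset.coe_product]
    exact Set.prod_mono ha hb
  rw [entH_eq_sum _ _ hsub, Finset.sum_product]
  have : ∀ x ∈ sa, ∑ y ∈ sb, Real.negMulLog ((prodPMF μ ν (x, y)).toReal)
      = (μ x).toReal * entH ν + Real.negMulLog ((μ x).toReal) := by
    intro x _
    calc ∑ y ∈ sb, Real.negMulLog ((prodPMF μ ν (x, y)).toReal)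
        = ∑ y ∈ sb, ((μ x).toReal * Real.negMulLog ((ν y).toReal)
            + (ν y).toReal * Real.negMulLog ((μ x).toReal)) :=
          Finset.sum_congr rfl (fun y _ => by
            rw [prodPMF_apply, ENNReal.toReal_mul, Real.negMulLog_mul]; ring)
      _ = (μ x).toReal * entH ν + Real.negMulLog ((μ x).toReal) := by
          rw [Finset.sum_add_distrib, ← Finset.mul_sum, ← Finset.sum_mul,
            mass_eq_one ν sb hb, entH_eq_sum ν sb hb]
          ring
  rw [Finset.sum_congr rfl this, Finset.sum_add_distrib, ← Finset.sum_mul,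
    mass_eq_one μ sa ha, entH_eq_sum μ sa ha]
  ring

/-! ### Positive words in a free group -/

noncomputable def w {α : Type*} (L : List α) : FreeGroup α :=
  FreeGroup.mk (L.map (fun i => (i, true)))

lemma reduce_pos {α : Type*} [DecidableEq α] (L : List α) :
    FreeGroup.reduce (L.map (fun i => (i, true))) = L.map (fun i => (i, true)) := by
  induction L with
  | nil => simp
  | cons a t ih =>
    rw [List.map_cons, FreeGroup.reduce.cons, ih]
    cases t with
    | nil => simp
    | cons b t' => simp

lemma w_injective {α : Type*} [DecidableEq α] :
    Function.Injective (w : List α → FreeGroup α) := by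
  intro L1 L2 h
  have h2 : FreeGroup.reduce (L1.map (fun i => (i, true)))
      = FreeGroup.reduce (L2.map (fun i => (i, true))) := by
    rw [← FreeGroup.toWord_mk, ← FreeGroup.toWord_mk]
    exact congrArg FreeGroup.toWord h
  rw [reduce_pos, reduce_pos] at h2
  have hinj : Function.Injective (fun i : α => (i, true)) := fun a b hab =>
    (Prod.ext_iff.1 hab).1
  exact List.map_injective_iff.2 hinj h2

lemma w_append {α : Type*} (L1 L2 : List α) : w (L1 ++ L2) = w L1 * w L2 := by
  rw [w, List.map_append, ← FreeGroup.mul_mk]; rfl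

lemma w_nil {α : Type*} : (w ([] : List α)) = 1 := by rw [w]; simp [FreeGroup.one_eq_mk]

lemma of_eq_w {α : Type*} (i : α) : FreeGroup.of i = w [i] := rfl

noncomputable def Dn (α : Type*) [Fintype α] [DecidableEq α] (n : ℕ) :
    Finset (FreeGroup α × FreeGroup α) :=
  Finset.image (fun v : List.Vector α n × List.Vector α n =>
    (w v.1.toList, w v.2.toList)) Finset.univ

lemma mem_Dn {α : Type*} [Fintype α] [DecidableEq α] {n : ℕ}
    {z : FreeGroup α × FreeGroup α} :
    z ∈ Dn α n ↔ ∃ L1 L2 : List α, L1.length = n ∧ L2.length = n ∧ z = (w L1, w L2) := by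
  constructor
  · intro hz
    obtain ⟨v, -, hv⟩ := Finset.mem_image.1 hz
    exact ⟨v.1.toList, v.2.toList, v.1.toList_length, v.2.toList_length, hv.symm⟩
  · rintro ⟨L1, L2, h1, h2, rfl⟩
    exact Finset.mem_image.2 ⟨(⟨L1, h1⟩, ⟨L2, h2⟩), Finset.mem_univ _, rfl⟩

lemma injOn_mul {α : Type*} [Fintype α] [DecidableEq α] (n : ℕ) :
    Set.InjOn (fun p : (FreeGroup α × FreeGroup α) × (FreeGroup α × FreeGroup α) => p.1 * p.2)
      ↑(Dn α n ×ˢ Dn α 1) := by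
  rintro ⟨z1, z2⟩ hz ⟨y1, y2⟩ hy h
  simp only [Finset.coe_product, Set.mem_prod, Finset.mem_coe] at hz hy
  obtain ⟨A1, A2, hA1, hA2, rfl⟩ := mem_Dn.1 hz.1
  obtain ⟨a1, a2, ha1, ha2, rfl⟩ := mem_Dn.1 hz.2
  obtain ⟨B1, B2, hB1, hB2, rfl⟩ := mem_Dn.1 hy.1
  obtain ⟨b1, b2, hb1, hb2, rfl⟩ := mem_Dn.1 hy.2
  simp only [Prod.mk_mul_mk, Prod.mk.injEq, ← w_append] at h
  have e1 := List.append_inj (w_injective h.1) (hA1.trans hB1.symm)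
  have e2 := List.append_inj (w_injective h.2) (hA2.trans hB2.symm)
  simp [e1.1, e1.2, e2.1, e2.2]

lemma mul_mem_Dn {α : Type*} [Fintype α] [DecidableEq α] {n : ℕ}
    {z y : FreeGroup α × FreeGroup α}
    (hz : z ∈ Dn α n) (hy : y ∈ Dn α 1) : z * y ∈ Dn α (n + 1) := by
  obtain ⟨A1, A2, hA1, hA2, rfl⟩ := mem_Dn.1 hz
  obtain ⟨a1, a2, ha1, ha2, rfl⟩ := mem_Dn.1 hy
  refine mem_Dn.2 ⟨A1 ++ a1, A2 ++ a2, by simp [hA1, ha1], by simp [hA2, ha2], ?_⟩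
  simp [w_append, Prod.mk_mul_mk]

lemma one_mem_Dn {α : Type*} [Fintype α] [DecidableEq α] :
    (1 : FreeGroup α × FreeGroup α) ∈ Dn α 0 :=
  mem_Dn.2 ⟨[], [], rfl, rfl, by rw [w_nil]; rfl⟩

lemma convN_entH {α : Type*} [Fintype α] [DecidableEq α]
    (P : PMF (FreeGroup α × FreeGroup α)) (hP : P.support ⊆ ↑(Dn α 1)) (n : ℕ) :
    (convN P n).support ⊆ ↑(Dn α n) ∧ entH (convN P n) = n * entH P := by
  induction n with
  | zero =>
    constructor
    · rw [convN, PMF.support_pure]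
      simpa using one_mem_Dn
    · rw [convN, entH_pure]; simp
  | succ n ih =>
    have hconv : convN P (n + 1) = (prodPMF (convN P n) P).map (fun p => p.1 * p.2) := by
      rw [convN, conv_eq_map_prod]
    have hps : (prodPMF (convN P n) P).support ⊆ ↑(Dn α n ×ˢ Dn α 1) := by
      rw [support_prodPMF, Finset.coe_product]
      exact Set.prod_mono ih.1 hP
    constructor
    · rw [hconv, PMF.support_map]
      rintro z ⟨p, hp, rfl⟩
      have := hps hp
      rw [Finset.mem_coe, Finset.mem_product] at this
      exact mul_mem_Dn this.1 this.2
    · rw [hconv, entH_map_injOn _ _ _ hps (injOn_mul n),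
        entH_prod _ _ _ _ ih.1 hP, ih.2]
      push_cast
      ring

end Aux

section Aux2

lemma mix_apply {X : Type*} {ρ : ℝ} (h1 : ρ ≤ 1) (μ ν : PMF X) (z : X) :
    mix ρ μ ν z = ENNReal.ofReal ρ * μ z + (1 - ENNReal.ofReal ρ) * ν z := by
  have hmin : min (Real.toNNReal ρ) 1 = Real.toNNReal ρ :=
    min_eq_left (by simpa using h1)
  rw [mix, PMF.bind_apply, tsum_bool]
  simp [PMF.bernoulli_apply, hmin, add_comm]; rfl

lemma diagPMF_apply {X : Type*} [DecidableEq X] (μ : PMF X) (x y : X) :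
    diagPMF μ (x, y) = if x = y then μ x else 0 := by
  rw [diagPMF, PMF.map_apply]
  by_cases h : x = y
  · subst h
    rw [if_pos rfl, tsum_eq_single x]
    · simp
    · intro t ht; simp [Prod.ext_iff, Ne.symm ht]
  · rw [if_neg h]
    convert tsum_zero with t
    have : ¬ ((x, y) = (t, t)) := by
      rintro ⟨⟩
      exact h rfl
    simp [this]

open scoped Classical in
lemma hFormula_eq (m : ℕ) (hm : 2 ≤ m) (ρ : ℝ) (h0 : 0 ≤ ρ) (h1 : ρ ≤ 1) :
    (m : ℝ) * Real.negMulLog (ρ / m ^ 2 + (1 - ρ) / m)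
      + ((m : ℝ) ^ 2 - m) * Real.negMulLog (ρ / m ^ 2) = hFormula m ρ := by
  have hm2 : (2:ℝ) ≤ m := by exact_mod_cast hm
  have hm0 : (0:ℝ) < m := by linarith
  have hmne : (m:ℝ) ≠ 0 := ne_of_gt hm0
  set q : ℝ := ((m : ℝ) - 1) / m * ρ with hq
  have hq1 : 1 - q > 0 := by
    have h2 : ((m:ℝ) - 1)/m < 1 := by
      rw [div_lt_one hm0]; linarith
    have : q ≤ ((m:ℝ)-1)/m := by
      rw [hq]
      nlinarith [div_nonneg (by linarith : (0:ℝ) ≤ (m:ℝ)-1) (le_of_lt hm0)]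
    linarith
  have ha : ρ / m ^ 2 + (1 - ρ) / m = (1 - q) / m := by
    rw [hq]; field_simp; ring
  rcases eq_or_lt_of_le h0 with h0' | h0'
  · rw [← h0']
    simp only [hq, mul_zero, zero_div, zero_add, sub_zero, zero_mul, hFormula,
      Real.negMulLog_zero, mul_zero, sub_zero]
    simp [Real.negMulLog, Real.log_div one_ne_zero hmne]
    field_simp
  · have hb : ρ / m ^ 2 > 0 := by positivity
    have la : Real.log ((1 - q)/m) = Real.log (1 - q) - Real.log m :=
      Real.log_div (ne_of_gt hq1) hmne
    have lb : Real.log (ρ / m ^ 2) = Real.log ρ - 2 * Real.log m := by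
      rw [Real.log_div (ne_of_gt h0') (by positivity), Real.log_pow]; ring
    have lc : Real.log (ρ / m) = Real.log ρ - Real.log m :=
      Real.log_div (ne_of_gt h0') hmne
    rw [ha, hFormula, lc, Real.negMulLog, Real.negMulLog, la, lb, ← hq]
    generalize Real.log (1 - q) = L
    rw [hq]
    field_simp
    ring

open scoped Classical in
lemma hFormula_one' (m : ℕ) (hm : 2 ≤ m) : hFormula m 1 = 2 * Real.log m := by
  have hm2 : (2:ℝ) ≤ m := by exact_mod_cast hm
  have hmne : (m:ℝ) ≠ 0 := by linarith
  rw [hFormula]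
  rw [show (1:ℝ) - ((m:ℝ)-1)/m * 1 = 1/m by field_simp; ring]
  rw [Real.log_div one_ne_zero hmne]
  field_simp
  simp; ring

lemma key_ineq {N t : ℝ} (hN : 0 < N) (ht : 0 ≤ t) :
    Real.negMulLog t ≤ 1/N - t + t * Real.log N := by
  rcases eq_or_lt_of_le ht with h | h
  · rw [← h]; simp; positivity
  · have h2 : Real.log (1/(N*t)) ≤ 1/(N*t) - 1 := Real.log_le_sub_one_of_pos (by positivity)
    have h3 : Real.log (1/(N*t)) = - Real.log N - Real.log t := by
      rw [one_div, Real.log_inv, Real.log_mul (ne_of_gt hN) (ne_of_gt h)]; ring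
    have h4 : t * Real.log (1/(N*t)) ≤ t * (1/(N*t) - 1) :=
      mul_le_mul_of_nonneg_left h2 ht
    rw [h3] at h4
    have h5 : t * (1/(N*t) - 1) = 1/N - t := by field_simp
    rw [Real.negMulLog]; nlinarith

lemma key_ineq_strict {N t : ℝ} (hN : 0 < N) (ht : 0 ≤ t) (hne : N * t ≠ 1) :
    Real.negMulLog t < 1/N - t + t * Real.log N := by
  rcases eq_or_lt_of_le ht with h | h
  · rw [← h]; simp; positivity
  · have h2 : Real.log (1/(N*t)) < 1/(N*t) - 1 := by
      apply Real.log_lt_sub_one_of_pos (by positivity)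
      intro hc
      apply hne
      field_simp at hc
      linarith
    have h3 : Real.log (1/(N*t)) = - Real.log N - Real.log t := by
      rw [one_div, Real.log_inv, Real.log_mul (ne_of_gt hN) (ne_of_gt h)]; ring
    have h4 : t * Real.log (1/(N*t)) < t * (1/(N*t) - 1) :=
      mul_lt_mul_of_pos_left h2 h
    rw [h3] at h4
    have h5 : t * (1/(N*t) - 1) = 1/N - t := by field_simp
    rw [Real.negMulLog]; nlinarith

lemma entropy_lt (m : ℕ) (hm : 2 ≤ m) {a b : ℝ} (ha : 0 ≤ a) (hb : 0 ≤ b)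
    (hsum : (m:ℝ) * a + ((m:ℝ)^2 - m) * b = 1) (hab : a ≠ b) :
    (m:ℝ) * Real.negMulLog a + ((m:ℝ)^2 - m) * Real.negMulLog b < 2 * Real.log m := by
  have hm2 : (2:ℝ) ≤ m := by exact_mod_cast hm
  have hcoef : (0:ℝ) < (m:ℝ) := by linarith
  have hN : (0:ℝ) < (m:ℝ)^2 := by positivity
  have hlogN : Real.log ((m:ℝ)^2) = 2 * Real.log m := by
    rw [sq, Real.log_mul (by linarith) (by linarith)]; ring
  have hcoef2 : (0:ℝ) < (m:ℝ)^2 - m := by nlinarith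
  set N : ℝ := (m:ℝ)^2 with hNdef
  have hkey : (m:ℝ) * (1/N - a + a * Real.log N) + (N - (m:ℝ)) * (1/N - b + b * Real.log N)
      = 2 * Real.log m := by
    have e : (m:ℝ) * (1/N - a + a * Real.log N) + (N - (m:ℝ)) * (1/N - b + b * Real.log N)
        = N * (1/N) - ((m:ℝ)*a + (N - (m:ℝ))*b)
          + ((m:ℝ)*a + (N - (m:ℝ))*b) * Real.log N := by
      ring
    rw [e, hsum, mul_one_div, div_self (ne_of_gt hN), hlogN]; ring
  have hne : N * a ≠ 1 ∨ N * b ≠ 1 := by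
    by_contra hc
    push_neg at hc
    exact hab (mul_left_cancel₀ (ne_of_gt hN) (hc.1.trans hc.2.symm))
  rcases hne with hne | hne
  · have h1 := mul_lt_mul_of_pos_left (key_ineq_strict hN ha hne) hcoef
    have h2 := mul_le_mul_of_nonneg_left (key_ineq hN hb) (le_of_lt hcoef2)
    linarith
  · have h1 := mul_le_mul_of_nonneg_left (key_ineq hN ha) (le_of_lt hcoef)
    have h2 := mul_lt_mul_of_pos_left (key_ineq_strict hN hb hne) hcoef2
    linarith

end Aux2

section Aux3

open scoped Classical

lemma mu_of {m : ℕ} (μ : PMF (FreeGroup (Fin m)))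
    (hμ : ∀ x, μ x = if ∃ i : Fin m, x = FreeGroup.of i then ((m : ℝ≥0∞))⁻¹ else 0)
    (i : Fin m) : μ (FreeGroup.of i) = ((m : ℝ≥0∞))⁻¹ := by
  rw [hμ]; exact if_pos ⟨i, rfl⟩

lemma mu_supp {m : ℕ} (μ : PMF (FreeGroup (Fin m)))
    (hμ : ∀ x, μ x = if ∃ i : Fin m, x = FreeGroup.of i then ((m : ℝ≥0∞))⁻¹ else 0)
    {x : FreeGroup (Fin m)} (hx : μ x ≠ 0) : ∃ i : Fin m, x = FreeGroup.of i := by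
  by_contra hc
  rw [hμ, if_neg hc] at hx
  exact hx rfl

lemma piRho_pair {m : ℕ} (hm : 2 ≤ m) (μ : PMF (FreeGroup (Fin m)))
    (hμ : ∀ x, μ x = if ∃ i : Fin m, x = FreeGroup.of i then ((m : ℝ≥0∞))⁻¹ else 0)
    {ρ : ℝ} (h0 : 0 ≤ ρ) (h1 : ρ ≤ 1) (i j : Fin m) :
    ((piRho μ ρ) (FreeGroup.of i, FreeGroup.of j)).toReal
      = if i = j then ρ / (m:ℝ)^2 + (1-ρ)/(m:ℝ) else ρ / (m:ℝ)^2 := by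
  have hmne : ((m:ℕ) : ℝ≥0∞) ≠ 0 := by
    simp only [ne_eq, Nat.cast_eq_zero]; omega
  have hinvtop : ((m : ℝ≥0∞))⁻¹ ≠ ⊤ := ENNReal.inv_ne_top.2 hmne
  have hmR : (0:ℝ) < (m:ℝ) := by positivity
  have hsub : (1 : ℝ≥0∞) - ENNReal.ofReal ρ = ENNReal.ofReal (1 - ρ) := by
    rw [ENNReal.ofReal_sub 1 h0, ENNReal.ofReal_one]
  rw [piRho, mix_apply h1, prodPMF_apply, diagPMF_apply, mu_of μ hμ, mu_of μ hμ, hsub]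
  by_cases hij : i = j
  · rw [if_pos (by rw [hij]), if_pos hij]
    rw [ENNReal.toReal_add (by finiteness) (by finiteness)]
    rw [ENNReal.toReal_mul, ENNReal.toReal_mul, ENNReal.toReal_mul,
      ENNReal.toReal_ofReal h0, ENNReal.toReal_ofReal (by linarith),
      ENNReal.toReal_inv, ENNReal.toReal_natCast]
    field_simp
  · rw [if_neg (fun h => hij (FreeGroup.of_injective h)), if_neg hij, mul_zero, add_zero]
    rw [ENNReal.toReal_mul, ENNReal.toReal_mul,
      ENNReal.toReal_ofReal h0, ENNReal.toReal_inv, ENNReal.toReal_natCast]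
    rw [sq]
    field_simp

lemma piRho_supp {m : ℕ} (μ : PMF (FreeGroup (Fin m)))
    (hμ : ∀ x, μ x = if ∃ i : Fin m, x = FreeGroup.of i then ((m : ℝ≥0∞))⁻¹ else 0)
    {ρ : ℝ} (h1 : ρ ≤ 1) :
    (piRho μ ρ).support ⊆
      ↑(Finset.image (fun ij : Fin m × Fin m =>
          (FreeGroup.of ij.1, FreeGroup.of ij.2)) Finset.univ) := by
  rintro ⟨x, y⟩ hz
  rw [PMF.mem_support_iff, piRho, mix_apply h1] at hz
  have hor : prodPMF μ μ (x, y) ≠ 0 ∨ diagPMF μ (x, y) ≠ 0 := by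
    by_contra hc
    push_neg at hc
    rw [hc.1, hc.2] at hz
    simp at hz
  have hxy : μ x ≠ 0 ∧ μ y ≠ 0 := by
    rcases hor with h | h
    · rw [prodPMF_apply] at h
      exact ⟨fun h0 => h (by rw [h0, zero_mul]), fun h0 => h (by rw [h0, mul_zero])⟩
    · rw [diagPMF_apply] at h
      by_cases hxy : x = y
      · rw [if_pos hxy] at h
        exact ⟨h, by rw [← hxy]; exact h⟩
      · rw [if_neg hxy] at h
        exact absurd rfl h
  obtain ⟨i, rfl⟩ := mu_supp μ hμ hxy.1
  obtain ⟨j, rfl⟩ := mu_supp μ hμ hxy.2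
  exact Finset.mem_coe.2 (Finset.mem_image.2 ⟨(i, j), Finset.mem_univ _, rfl⟩)

lemma E_subset_Dn (m : ℕ) :
    (Finset.image (fun ij : Fin m × Fin m =>
      (FreeGroup.of ij.1, FreeGroup.of ij.2)) Finset.univ : Finset _)
      ⊆ Dn (Fin m) 1 := by
  intro z hz
  obtain ⟨⟨i, j⟩, -, rfl⟩ := Finset.mem_image.1 hz
  exact mem_Dn.2 ⟨[i], [j], rfl, rfl, by rw [of_eq_w, of_eq_w]⟩

lemma entH_piRho {m : ℕ} (hm : 2 ≤ m) (μ : PMF (FreeGroup (Fin m)))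
    (hμ : ∀ x, μ x = if ∃ i : Fin m, x = FreeGroup.of i then ((m : ℝ≥0∞))⁻¹ else 0)
    {ρ : ℝ} (h0 : 0 ≤ ρ) (h1 : ρ ≤ 1) :
    entH (piRho μ ρ) = hFormula m ρ := by
  set nA := Real.negMulLog (ρ / (m:ℝ)^2 + (1-ρ)/(m:ℝ)) with hnA
  set nB := Real.negMulLog (ρ / (m:ℝ)^2) with hnB
  have hinj : ∀ p ∈ (Finset.univ : Finset (Fin m × Fin m)), ∀ q ∈ Finset.univ,
      (fun ij : Fin m × Fin m => (FreeGroup.of ij.1, FreeGroup.of ij.2)) p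
        = (fun ij : Fin m × Fin m => (FreeGroup.of ij.1, FreeGroup.of ij.2)) q → p = q := by
    rintro ⟨i, j⟩ - ⟨k, l⟩ - h
    simp only [Prod.mk.injEq] at h
    exact Prod.ext (FreeGroup.of_injective h.1) (FreeGroup.of_injective h.2)
  rw [entH_eq_sum _ _ (piRho_supp μ hμ h1), Finset.sum_image hinj]
  have hval : ∀ ij : Fin m × Fin m,
      Real.negMulLog (((piRho μ ρ) (FreeGroup.of ij.1, FreeGroup.of ij.2)).toReal)
        = nB + (if ij.1 = ij.2 then nA - nB else 0) := by
    rintro ⟨i, j⟩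
    rw [piRho_pair hm μ hμ h0 h1 i j]
    by_cases hij : i = j
    · rw [if_pos hij, if_pos hij]; ring
    · rw [if_neg hij, if_neg hij]; ring
  rw [Finset.sum_congr rfl (fun ij _ => hval ij), Finset.sum_add_distrib,
    Finset.sum_const, Fintype.sum_prod_type]
  have hdiag : ∀ i : Fin m, ∑ j : Fin m, (if i = j then nA - nB else 0) = nA - nB := by
    intro i
    simp [Finset.sum_ite_eq]
  rw [Finset.sum_congr rfl (fun i _ => hdiag i), Finset.sum_const, Finset.card_univ,
    Finset.card_univ]
  have hcard : (Fintype.card (Fin m × Fin m) : ℝ) = (m:ℝ)^2 := by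
    simp [Fintype.card_prod]; ring
  rw [← hFormula_eq m hm ρ h0 h1, nsmul_eq_mul, nsmul_eq_mul, hcard]
  simp only [Fintype.card_fin]
  ring

end Aux3

open scoped Classical in
theorem statement14 (m : ℕ) (hm : 2 ≤ m)
    (μ : PMF (FreeGroup (Fin m)))
    (hμ : ∀ x, μ x = if ∃ i : Fin m, x = FreeGroup.of i then ((m : ℝ≥0∞))⁻¹ else 0) :
    (∀ ρ : ℝ, 0 ≤ ρ → ρ ≤ 1 →
      Filter.Tendsto (fun n : ℕ => entH (convN (piRho μ ρ) n) / (n : ℝ))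
        Filter.atTop (nhds (hFormula m ρ))) ∧
    hFormula m 1 = 2 * Real.log m ∧
    (∀ ρ : ℝ, 0 ≤ ρ → ρ < 1 → hFormula m ρ < hFormula m 1) := by
  have hmR : (0:ℝ) < (m:ℝ) := by positivity
  have hm2 : (2:ℝ) ≤ (m:ℝ) := by exact_mod_cast hm
  refine ⟨?_, hFormula_one' m hm, ?_⟩
  · intro ρ h0 h1
    have hsupp : (piRho μ ρ).support ⊆ ↑(Dn (Fin m) 1) :=
      (piRho_supp μ hμ h1).trans (Finset.coe_subset.2 (E_subset_Dn m))
    have hent : entH (piRho μ ρ) = hFormula m ρ := entH_piRho hm μ hμ h0 h1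
    refine Filter.Tendsto.congr' ?_ tendsto_const_nhds
    filter_upwards [Filter.eventually_ge_atTop 1] with n hn
    have hn0 : ((n:ℝ)) ≠ 0 := Nat.cast_ne_zero.2 (by omega)
    rw [(convN_entH _ hsupp n).2, hent, mul_comm, mul_div_assoc, div_self hn0, mul_one]
  · intro ρ h0 h1
    rw [hFormula_one' m hm, ← hFormula_eq m hm ρ h0 (le_of_lt h1)]
    have ha : (0:ℝ) ≤ ρ / (m:ℝ)^2 + (1-ρ)/(m:ℝ) := by
      have : (0:ℝ) ≤ 1 - ρ := by linarith
      positivity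
    have hb : (0:ℝ) ≤ ρ / (m:ℝ)^2 := by positivity
    have hsum : (m:ℝ) * (ρ / (m:ℝ)^2 + (1-ρ)/(m:ℝ)) + ((m:ℝ)^2 - m) * (ρ / (m:ℝ)^2) = 1 := by
      field_simp
      ring
    have hab : ρ / (m:ℝ)^2 + (1-ρ)/(m:ℝ) ≠ ρ / (m:ℝ)^2 := by
      intro h
      have h2 : (1-ρ)/(m:ℝ) = 0 := by linarith
      rw [div_eq_zero_iff] at h2
      rcases h2 with h2 | h2
      · linarith
      · linarith
    exact entropy_lt m hm ha hb hsum hab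

end NS
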